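/- Let G be a subgroup of GL(2,ℂ) and define the rescaled set G' = { h : h is a 2×2 complex matrix with det h = 1 and h = c • g for some g ∈ G and some c ∈ ℂ }. Then G is unitary if and only if |det g| = 1 for every g ∈ G and G' is unitary (with respect to some nondegenerate Hermitian form preserved by all elements of G'). -/

import Mathlib

open Matrix Complex

/-- A set of invertible 2×2 complex matrices is *unitary* if it preserves some nondegenerate
Hermitian form `H` under `g ↦ gᴴ H g`. -/
def IsUnitaryMatrixGroup (S : Set (Matrix (Fin 2) (Fin 2) ℂ)) : Prop :=
  ∃ H : Matrix (Fin 2) (Fin 2) ℂ, H.IsHermitian ∧ H.det ≠ 0 ∧ ∀ g ∈ S, gᴴ * H * g = H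

lemma star_mul_self_of_abs_one (c : ℂ) (h : ‖c‖ = 1) : star c * c = 1 := by
  have := Complex.mul_conj c
  have h2 : Complex.normSq c = 1 := by
    rw [← Complex.sq_norm, h]; norm_num
  rw [mul_comm] at this
  rw [show (star c : ℂ) = (starRingEnd ℂ) c from rfl, this, h2]
  norm_num

lemma smul_conj_helper (c : ℂ) (g H : Matrix (Fin 2) (Fin 2) ℂ) :
    (c • g)ᴴ * H * (c • g) = (star c * c) • (gᴴ * H * g) := by
  rw [Matrix.conjTranspose_smul, Matrix.smul_mul, Matrix.smul_mul, Matrix.mul_smul,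
    smul_smul]

/-- A subgroup `G ⊆ GL(2,ℂ)` is unitary iff all its elements have determinant of absolute
value 1 and its rescaled group `G' = {± g / √(det g)} ⊆ SL(2,ℂ)` is unitary. -/
theorem unitary_iff_rescaled_unitary (G : Subgroup (GL (Fin 2) ℂ)) :
    IsUnitaryMatrixGroup {m : Matrix (Fin 2) (Fin 2) ℂ | ∃ g ∈ G, (g : Matrix (Fin 2) (Fin 2) ℂ) = m} ↔
      ((∀ g ∈ G, ‖((g : Matrix (Fin 2) (Fin 2) ℂ)).det‖ = 1) ∧
        IsUnitaryMatrixGroup {h : Matrix (Fin 2) (Fin 2) ℂ | h.det = 1 ∧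
          ∃ g ∈ G, ∃ c : ℂ, h = c • (g : Matrix (Fin 2) (Fin 2) ℂ)}) := by
  constructor
  · rintro ⟨H, hH, hdet, hfix⟩
    have habs : ∀ g ∈ G, ‖((g : Matrix (Fin 2) (Fin 2) ℂ)).det‖ = 1 := by
      intro g hg
      set d := ((g : Matrix (Fin 2) (Fin 2) ℂ)).det with hd
      have h1 := hfix _ ⟨g, hg, rfl⟩
      have h2 := congrArg Matrix.det h1
      rw [Matrix.det_mul, Matrix.det_mul, Matrix.det_conjTranspose] at h2
      have h3 : star d * d = 1 := by
        have h3' : (star d * d - 1) * H.det = 0 := by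
          rw [Complex.star_def] at h2 ⊢
          linear_combination h2
        rcases mul_eq_zero.mp h3' with h | h
        · linear_combination h
        · exact absurd h hdet
      have h4 : Complex.normSq d = 1 := by
        have := Complex.mul_conj d
        rw [mul_comm] at this
        rw [show (star d : ℂ) = (starRingEnd ℂ) d from rfl, this] at h3
        exact_mod_cast h3
      have : ‖d‖ ^ 2 = 1 := by rw [Complex.sq_norm, h4]
      nlinarith [norm_nonneg d]
    refine ⟨habs, H, hH, hdet, ?_⟩
    rintro h ⟨hdet1, g, hg, c, rfl⟩
    have hcabs : ‖c‖ = 1 := by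
      have hdm : (c • (g : Matrix (Fin 2) (Fin 2) ℂ)).det
          = c ^ 2 * ((g : Matrix (Fin 2) (Fin 2) ℂ)).det := by
        rw [Matrix.det_smul]; norm_num
      rw [hdm] at hdet1
      have := congrArg (‖·‖) hdet1
      rw [norm_mul, norm_pow, habs g hg, norm_one] at this
      nlinarith [norm_nonneg c]
    rw [smul_conj_helper, hfix _ ⟨g, hg, rfl⟩, star_mul_self_of_abs_one c hcabs, one_smul]
  · rintro ⟨habs, H, hH, hdet, hfix⟩
    refine ⟨H, hH, hdet, ?_⟩
    rintro m ⟨g, hg, rfl⟩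
    set d := ((g : Matrix (Fin 2) (Fin 2) ℂ)).det with hd
    have hdne : d ≠ 0 := by
      intro h0
      have h1 : ‖d‖ = 1 := habs g hg
      rw [h0] at h1
      simp at h1
    obtain ⟨c, hc⟩ := IsAlgClosed.exists_pow_nat_eq (k := ℂ) d⁻¹ (n := 2) (by norm_num)
    have hm : (c • (g : Matrix (Fin 2) (Fin 2) ℂ)).det = 1 := by
      rw [Matrix.det_smul]
      simp only [Fintype.card_fin, ← hd]
      rw [hc]
      field_simp
    have hcabs : ‖c‖ = 1 := by
      have := congrArg (‖·‖) hc
      rw [norm_pow, norm_inv, habs g hg] at this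
      nlinarith [norm_nonneg c]
    have := hfix _ ⟨hm, g, hg, c, rfl⟩
    rw [smul_conj_helper, star_mul_self_of_abs_one c hcabs, one_smul] at this
    exact this
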